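/- Let k ≥ 1 and m ≥ 2. Fix θ ∈ ℝ^k, radii ρ, ρ' > 0, and a nonempty set N ⊆ ℝ^k with B̄(θ,ρ') ⊆ N ⊆ B̄(θ,ρ). Let μ be a Borel probability measure on ℝ^k and let n ≥ 1 be a real number with μ{ε : ‖ε‖₂ ≤ ρ'} ≥ 1 − 1/√n. For each domain e ∈ E = {0,…,m−1} let L_e : ℝ^k → ℝ be Borel measurable with 0 ≤ L_e(θ') ≤ M for all θ' ∈ ℝ^k (M ≥ 0), and let a_e ∈ ℝ (the population risk of domain e at θ) and constants C_e ∈ ℝ satisfy: a_s ≤ sup_{‖ε‖₂≤ρ} L_s(θ+ε) + C_s for the source index s ∈ E, and a_e ≤ ∫ L_e(θ+ε) dμ(ε) + C_e for every e ≠ s. Assume moreover L_s(θ') ≤ max_{e∈E} L_e(θ') for all θ' ∈ N. Then (1/m)·Σ_{e∈E} a_e ≤ sup_{‖ε‖₂≤ρ} L_s(θ+ε) + (1 − 1/m)·max_{e∈E} sup_{θ'∈N} |L_e(θ') − L_s(θ')| + (1/m)·C_s + (1 − 1/m)·(max_{e≠s} C_e + M/√n). -/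

import Mathlib

open MeasureTheory Metric

/-- deterministic core of the UDIM generalization bound (Theorem 2).
The population risk averaged over all domains is bounded by the SAM loss on the
source domain, plus the cross-domain region-based loss inconsistency, plus
residual constants. -/
theorem udim_generalization_bound
    (k m : ℕ) (hk : 1 ≤ k) (hm : 2 ≤ m)
    (θ : EuclideanSpace ℝ (Fin k)) (ρ ρ' : ℝ) (hρ : 0 < ρ) (hρ' : 0 < ρ')
    (N : Set (EuclideanSpace ℝ (Fin k))) (hN_ne : N.Nonempty)
    (hN_sub : closedBall θ ρ' ⊆ N) (hN_sup : N ⊆ closedBall θ ρ)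
    (μ : Measure (EuclideanSpace ℝ (Fin k))) [IsProbabilityMeasure μ]
    (n : ℝ) (hn : 1 ≤ n)
    (hμ : 1 - 1 / Real.sqrt n ≤ (μ {ε | ‖ε‖ ≤ ρ'}).toReal)
    (L : Fin m → EuclideanSpace ℝ (Fin k) → ℝ)
    (hL_meas : ∀ e, Measurable (L e))
    (M : ℝ) (hM : 0 ≤ M)
    (hL_nonneg : ∀ e θ', 0 ≤ L e θ') (hL_le : ∀ e θ', L e θ' ≤ M)
    (a C : Fin m → ℝ) (s : Fin m)
    (h_source : a s ≤ sSup ((fun ε => L s (θ + ε)) '' closedBall 0 ρ) + C s)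
    (h_target : ∀ e, e ≠ s → a e ≤ (∫ ε, L e (θ + ε) ∂μ) + C e)
    (h_assum : ∀ θ' ∈ N, L s θ' ≤ ⨆ e : Fin m, L e θ') :
    (1 / (m : ℝ)) * ∑ e : Fin m, a e ≤
      sSup ((fun ε => L s (θ + ε)) '' closedBall 0 ρ)
        + (1 - 1 / (m : ℝ)) *
            (⨆ e : Fin m, sSup ((fun θ' => |L e θ' - L s θ'|) '' N))
        + (1 / (m : ℝ)) * C s
        + (1 - 1 / (m : ℝ)) *
            ((⨆ e : {e : Fin m // e ≠ s}, C e.1) + M / Real.sqrt n) := by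
  classical
  set S := sSup ((fun ε => L s (θ + ε)) '' closedBall 0 ρ) with hS_def
  set D := ⨆ e : Fin m, sSup ((fun θ' => |L e θ' - L s θ'|) '' N) with hD_def
  set CM := ⨆ e : {e : Fin m // e ≠ s}, C e.1 with hCM_def
  have hmpos : (0:ℝ) < m := by positivity
  have hsn : 0 < Real.sqrt n := Real.sqrt_pos.mpr (by linarith)
  -- ρ' ≤ ρ
  have hρ'ρ : ρ' ≤ ρ := by
    have hx : θ + EuclideanSpace.single (⟨0, hk⟩ : Fin k) ρ' ∈ closedBall θ ρ' := by
      simp [mem_closedBall, dist_eq_norm, EuclideanSpace.norm_single, abs_of_pos hρ']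
    have := hN_sup (hN_sub hx)
    simpa [mem_closedBall, dist_eq_norm, EuclideanSpace.norm_single, abs_of_pos hρ'] using this
  have hbddS : BddAbove ((fun ε => L s (θ + ε)) '' closedBall 0 ρ) := by
    refine ⟨M, ?_⟩
    rintro y ⟨x, -, rfl⟩; exact hL_le s _
  have hS0 : 0 ≤ S := by
    have h0 : (0 : EuclideanSpace ℝ (Fin k)) ∈ closedBall (0 : EuclideanSpace ℝ (Fin k)) ρ :=
      mem_closedBall_self hρ.le
    have := le_csSup hbddS (Set.mem_image_of_mem _ h0)
    exact le_trans (hL_nonneg s (θ + 0)) this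
  have habs_le : ∀ e (θ' : EuclideanSpace ℝ (Fin k)), |L e θ' - L s θ'| ≤ M := by
    intro e θ'
    have h1 := hL_nonneg e θ'; have h2 := hL_nonneg s θ'
    have h3 := hL_le e θ'; have h4 := hL_le s θ'
    rw [abs_le]; constructor <;> linarith
  have hbddDe : ∀ e, BddAbove ((fun θ' => |L e θ' - L s θ'|) '' N) := by
    intro e; refine ⟨M, ?_⟩; rintro y ⟨x, -, rfl⟩; exact habs_le e x
  have hbddD : BddAbove (Set.range fun e : Fin m => sSup ((fun θ' => |L e θ' - L s θ'|) '' N)) :=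
    Set.Finite.bddAbove (Set.finite_range _)
  have hDe_le_D : ∀ e, sSup ((fun θ' => |L e θ' - L s θ'|) '' N) ≤ D := fun e =>
    le_ciSup hbddD e
  have hD0 : 0 ≤ D := by
    obtain ⟨x, hx⟩ := hN_ne
    have h1 : 0 ≤ |L s x - L s x| := abs_nonneg _
    have h2 := le_csSup (hbddDe s) (Set.mem_image_of_mem _ hx)
    exact le_trans (le_trans h1 h2) (hDe_le_D s)
  -- some e ≠ s exists
  have hne : ∃ e : Fin m, e ≠ s := by
    have : 1 < Fintype.card (Fin m) := by simp; omega
    exact Fintype.exists_ne_of_one_lt_card this s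
  haveI : Nonempty {e : Fin m // e ≠ s} := ⟨⟨hne.choose, hne.choose_spec⟩⟩
  have hC_le_CM : ∀ e : Fin m, e ≠ s → C e ≤ CM := by
    intro e he
    have hb : BddAbove (Set.range fun e : {e : Fin m // e ≠ s} => C e.1) :=
      Set.Finite.bddAbove (Set.finite_range _)
    exact le_ciSup hb ⟨e, he⟩
  -- the ball A
  set A : Set (EuclideanSpace ℝ (Fin k)) := closedBall 0 ρ' with hA_def
  have hA : MeasurableSet A := measurableSet_closedBall
  have hμA : 1 - 1 / Real.sqrt n ≤ (μ A).toReal := by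
    have : {ε : EuclideanSpace ℝ (Fin k) | ‖ε‖ ≤ ρ'} = A := by
      ext ε; simp [hA_def, mem_closedBall, dist_zero_right]
    rwa [this] at hμ
  have hμAc : (μ Aᶜ).toReal ≤ 1 / Real.sqrt n := by
    have hadd : μ A + μ Aᶜ = 1 := by
      rw [measure_add_measure_compl hA]; exact measure_univ
    have hAne : μ A ≠ ⊤ := measure_ne_top μ A
    have hAcne : μ Aᶜ ≠ ⊤ := measure_ne_top μ Aᶜ
    have : (μ A).toReal + (μ Aᶜ).toReal = 1 := by
      rw [← ENNReal.toReal_add hAne hAcne, hadd]; simp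
    linarith
  -- integral bound for e ≠ s
  have hint : ∀ e : Fin m, e ≠ s →
      (∫ ε, L e (θ + ε) ∂μ) ≤ S + D + M / Real.sqrt n := by
    intro e he
    have hmeas : Measurable fun ε : EuclideanSpace ℝ (Fin k) => L e (θ + ε) :=
      (hL_meas e).comp (measurable_const_add θ)
    have hintf : Integrable (fun ε => L e (θ + ε)) μ := by
      refine Integrable.mono' (integrable_const M) hmeas.aestronglyMeasurable ?_
      filter_upwards with ε
      rw [Real.norm_eq_abs, abs_of_nonneg (hL_nonneg e _)]
      exact hL_le e _
    have hintg : Integrable (fun ε => (S + D) + Aᶜ.indicator (fun _ => M) ε) μ :=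
      (integrable_const _).add ((integrable_const M).indicator hA.compl)
    have hptwise : ∀ ε, L e (θ + ε) ≤ (S + D) + Aᶜ.indicator (fun _ => M) ε := by
      intro ε
      by_cases hε : ε ∈ A
      · rw [Set.indicator_of_notMem (by simpa using hε), add_zero]
        have hεN : θ + ε ∈ N := by
          apply hN_sub
          simpa [mem_closedBall, dist_eq_norm] using
            (by simpa [hA_def, mem_closedBall, dist_zero_right] using hε : ‖ε‖ ≤ ρ')
        have hεBρ : ε ∈ closedBall (0 : EuclideanSpace ℝ (Fin k)) ρ := by
          have : ‖ε‖ ≤ ρ' := by simpa [hA_def, mem_closedBall, dist_zero_right] using hε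
          simp only [mem_closedBall, dist_zero_right]; linarith
        have h1 : L s (θ + ε) ≤ S := le_csSup hbddS (Set.mem_image_of_mem _ hεBρ)
        have h2 : |L e (θ + ε) - L s (θ + ε)| ≤ D :=
          le_trans (le_csSup (hbddDe e) (Set.mem_image_of_mem _ hεN)) (hDe_le_D e)
        have h3 : L e (θ + ε) ≤ L s (θ + ε) + |L e (θ + ε) - L s (θ + ε)| := by
          have := le_abs_self (L e (θ + ε) - L s (θ + ε)); linarith
        linarith
      · rw [Set.indicator_of_mem (by simpa using hε)]
        have := hL_le e (θ + ε); linarith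
    calc (∫ ε, L e (θ + ε) ∂μ)
        ≤ ∫ ε, ((S + D) + Aᶜ.indicator (fun _ => M) ε) ∂μ :=
          integral_mono hintf hintg hptwise
      _ = (S + D) + (μ Aᶜ).toReal * M := by
          rw [integral_add (integrable_const _) ((integrable_const M).indicator hA.compl),
            integral_const, integral_indicator_const _ hA.compl]
          simp [smul_eq_mul, measureReal_def]
      _ ≤ S + D + M / Real.sqrt n := by
          have : (μ Aᶜ).toReal * M ≤ (1 / Real.sqrt n) * M :=
            mul_le_mul_of_nonneg_right hμAc hM
          have h2 : (1 / Real.sqrt n) * M = M / Real.sqrt n := by ring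
          linarith [this, h2.le]
  -- bound each a e for e ≠ s
  have hae : ∀ e : Fin m, e ≠ s → a e ≤ S + D + CM + M / Real.sqrt n := by
    intro e he
    have := h_target e he
    have h1 := hint e he
    have h2 := hC_le_CM e he
    linarith
  -- sum bound
  have hsum : ∑ e : Fin m, a e ≤ (S + C s) + ((m : ℝ) - 1) * (S + D + CM + M / Real.sqrt n) := by
    have hsplit : ∑ e : Fin m, a e = a s + ∑ e ∈ Finset.univ.erase s, a e :=
      (Finset.add_sum_erase Finset.univ a (Finset.mem_univ s)).symm
    have hcard : (Finset.univ.erase s).card = m - 1 := by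
      rw [Finset.card_erase_of_mem (Finset.mem_univ s)]; simp
    have hsum2 : ∑ e ∈ Finset.univ.erase s, a e ≤
        ((m : ℝ) - 1) * (S + D + CM + M / Real.sqrt n) := by
      calc ∑ e ∈ Finset.univ.erase s, a e
          ≤ ∑ _e ∈ Finset.univ.erase s, (S + D + CM + M / Real.sqrt n) := by
            refine Finset.sum_le_sum ?_
            intro e he
            exact hae e (Finset.ne_of_mem_erase he)
        _ = ((m : ℝ) - 1) * (S + D + CM + M / Real.sqrt n) := by
            rw [Finset.sum_const, hcard, nsmul_eq_mul, Nat.cast_sub (by linarith : 1 ≤ m)]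
            norm_num
    rw [hsplit]; linarith [h_source]
  -- final arithmetic
  have hfin : (1 / (m : ℝ)) * ∑ e : Fin m, a e ≤
      (1 / (m : ℝ)) * ((S + C s) + ((m : ℝ) - 1) * (S + D + CM + M / Real.sqrt n)) :=
    mul_le_mul_of_nonneg_left hsum (by positivity)
  have heq : (1 / (m : ℝ)) * ((S + C s) + ((m : ℝ) - 1) * (S + D + CM + M / Real.sqrt n)) =
      S + (1 - 1 / (m : ℝ)) * D + (1 / (m : ℝ)) * C s
        + (1 - 1 / (m : ℝ)) * (CM + M / Real.sqrt n) := by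
    field_simp
    ring
  linarith [hfin, heq.le]
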